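/- In any (right) hypergroup over a group M_H, the identity (A9) holds: for every a ∈ M one has Λ(o, a) = θ⁻¹, where o is the left neutral element of Ξ and θ = Λ(o,o)⁻¹. -/

import Mathlib

/-- A (right) hypergroup over the group `H`, with basic set `M`:
structural mappings `Φ` (written `a^α`), `Ψ` (written `ᵃα`), `Ξ` (written `[a,b]`),
`Λ` (written `(a,b)`), satisfying conditions P1)–P4). -/
structure HypergroupOverGroup (M H : Type*) [Group H] where
  Φ : M → H → M
  Ψ : M → H → H
  Ξ : M → M → M
  Λ : M → M → H
  /-- the left neutral element of `Ξ` -/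
  o : M
  P1i : ∀ a b : M, ∃! x : M, Ξ x a = b
  P1ii : ∀ a : M, Ξ o a = a
  P2i : ∀ (a : M) (α β : H), Φ (Φ a α) β = Φ a (α * β)
  P2ii : ∀ a : M, Φ a 1 = a
  P3 : Function.Surjective fun α : H => Ψ o α
  A1 : ∀ (a : M) (α β : H), Ψ a (α * β) = Ψ a α * Ψ (Φ a α) β
  A2 : ∀ (a b : M) (α : H), Φ (Ξ a b) α = Ξ (Φ a (Ψ b α)) (Φ b α)
  A3 : ∀ (a b : M) (α : H),
    Λ a b * Ψ (Ξ a b) α = Ψ a (Ψ b α) * Λ (Φ a (Ψ b α)) (Φ b α)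
  A4 : ∀ a b c : M, Ξ (Ξ a b) c = Ξ (Φ a (Λ b c)) (Ξ b c)
  A5 : ∀ a b c : M,
    Λ a b * Λ (Ξ a b) c = Ψ a (Λ b c) * Λ (Φ a (Λ b c)) (Ξ b c)

/-- (A9): in any hypergroup over the group, `Λ(o, a) = θ⁻¹` for every `a ∈ M`,
where `o` is the left neutral element of `Ξ` and `θ = Λ(o,o)⁻¹`. -/
theorem hypergroup_A9 {M H : Type*} [Group H] (h : HypergroupOverGroup M H)
    (θ : H) (hθ : θ = (h.Λ h.o h.o)⁻¹) (a : M) :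
    h.Λ h.o a = θ⁻¹ := by
  subst hθ
  rw [inv_inv]
  set o := h.o
  -- Step 1: Φ o β = o for all β
  have hΦ : ∀ β : H, h.Φ o β = o := by
    intro β
    obtain ⟨γ, hγ⟩ := h.P3 β
    have hA2 := h.A2 o o γ
    rw [h.P1ii o] at hA2
    -- hA2 : h.Φ o γ = h.Ξ (h.Φ o (h.Ψ o γ)) (h.Φ o γ)
    obtain ⟨x, hx, hux⟩ := h.P1i (h.Φ o γ) (h.Φ o γ)
    have h1 : h.Φ o (h.Ψ o γ) = x := hux _ hA2.symm
    have h2 : o = x := hux _ (h.P1ii _)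
    simpa [show h.Ψ o γ = β from hγ] using h1.trans h2.symm
  -- Step 2: Ψ o β = c β c⁻¹ where c = Λ o o
  set c := h.Λ o o with hc
  have hconj : ∀ β : H, h.Ψ o β = c * β * c⁻¹ := by
    intro β
    obtain ⟨γ, hγ⟩ := h.P3 β
    have hA3 := h.A3 o o γ
    rw [h.P1ii o, hΦ, hΦ] at hA3
    -- hA3 : c * h.Ψ o γ = h.Ψ o (h.Ψ o γ) * c
    simp only at hγ
    rw [hγ] at hA3
    rw [eq_mul_inv_iff_mul_eq]
    exact hA3.symm
  -- Step 3: from A5, Ψ o (Λ o a) = c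
  have hA5 := h.A5 o o a
  rw [h.P1ii o, h.P1ii a, hΦ] at hA5
  -- hA5 : c * h.Λ o a = h.Ψ o (h.Λ o a) * h.Λ o a
  have : h.Ψ o (h.Λ o a) = c := by
    have := mul_right_cancel hA5.symm
    exact this
  rw [hconj] at this
  -- c * Λ o a * c⁻¹ = c
  have := mul_right_cancel (a := c * h.Λ o a * c⁻¹ * c) (b := c⁻¹ * c) (c := c)
  calc h.Λ o a = c⁻¹ * (c * h.Λ o a * c⁻¹) * c := by group
    _ = c⁻¹ * c * c := by rw [‹c * h.Λ o a * c⁻¹ = c›]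
    _ = c := by group
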